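/- Monotonicity of the Bessel quotient in order on the first interval: for fixed r ∈ (0, j_{ν,1}) and 0 ≤ ν < μ with r < j_{μ,1}, one has r·J_ν′(r)/J_ν(r) < r·J_μ′(r)/J_μ(r). -/

import Mathlib

/-- Bessel function of the first kind. -/
noncomputable def besselJ (ν x : ℝ) : ℝ :=
  ∑' k : ℕ, (-1 : ℝ) ^ k * (x / 2) ^ (ν + 2 * (k : ℝ)) /
    (Nat.factorial k * Real.Gamma (ν + k + 1))

/-- The first positive zero of the Bessel function `J ν`. -/
noncomputable def besselJZero (ν : ℝ) : ℝ :=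
  sInf {x : ℝ | 0 < x ∧ besselJ ν x = 0}

open FormalMultilinearSeries Filter Set

namespace BesselAux

/-- shift operator on coefficients: the derivative series. -/
noncomputable def sh (a : ℕ → ℝ) (n : ℕ) : ℝ := (n + 1 : ℝ) * a (n + 1)

/-- boundedness predicate ensuring entire power series. -/
def IsBnd (a : ℕ → ℝ) (K : ℝ) : Prop := ∀ n, |a n| ≤ K / (4 ^ n * n.factorial)

theorem isBnd_sh {a : ℕ → ℝ} {K : ℝ} (h : IsBnd a K) : IsBnd (sh a) K := by
  intro n
  have h1 := h (n + 1)
  have hK : 0 ≤ K := by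
    have := (abs_nonneg (a 0)).trans (h 0)
    simpa using this
  rw [sh, abs_mul]
  have hfac : ((n+1).factorial : ℝ) = (n+1) * n.factorial := by
    push_cast [Nat.factorial_succ]; ring
  have hb : |(n:ℝ) + 1| = (n:ℝ) + 1 := abs_of_nonneg (by positivity)
  rw [hb]
  calc ((n:ℝ)+1) * |a (n+1)| ≤ ((n:ℝ)+1) * (K / (4 ^ (n+1) * (n+1).factorial)) := by
        apply mul_le_mul_of_nonneg_left h1 (by positivity)
    _ = K / (4 ^ n * n.factorial) / 4 := by
        rw [hfac, pow_succ]
        have hn1 : ((n:ℝ)+1) ≠ 0 := by positivity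
        field_simp
    _ ≤ K / (4 ^ n * n.factorial) := by
        have hpos : (0:ℝ) < 4 ^ n * n.factorial := by positivity
        have : 0 ≤ K / (4 ^ n * n.factorial) := by positivity
        linarith [this]

theorem summable_abs_mul {a : ℕ → ℝ} {K : ℝ} (h : IsBnd a K) {y : ℝ} (hy : 0 ≤ y) :
    Summable (fun n ↦ |a n| * y ^ n) := by
  have : Summable (fun n : ℕ ↦ K * ((y/4) ^ n / n.factorial)) :=
    (Real.summable_pow_div_factorial (y/4)).mul_left K
  refine this.of_nonneg_of_le (fun n ↦ by positivity) (fun n ↦ ?_)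
  have h1 := h n
  have : |a n| * y ^ n ≤ K / (4 ^ n * n.factorial) * y ^ n :=
    mul_le_mul_of_nonneg_right h1 (by positivity)
  refine this.trans (le_of_eq ?_)
  rw [div_pow]
  field_simp

theorem summable_mul {a : ℕ → ℝ} {K : ℝ} (h : IsBnd a K) (y : ℝ) :
    Summable (fun n ↦ a n * y ^ n) := by
  refine Summable.of_norm ?_
  have := summable_abs_mul h (abs_nonneg y)
  refine this.congr (fun n ↦ ?_)
  simp [abs_mul, abs_pow]

theorem hasSum_ofScalarsSum {a : ℕ → ℝ} {K : ℝ} (h : IsBnd a K) (y : ℝ) :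
    HasSum (fun n ↦ a n * y ^ n) (ofScalarsSum a y) := by
  have hs := (summable_mul h y).hasSum
  rw [ofScalars_sum_eq]
  simpa [smul_eq_mul] using hs

theorem radius_top {a : ℕ → ℝ} {K : ℝ} (h : IsBnd a K) :
    (ofScalars ℝ a).radius = ⊤ := by
  apply FormalMultilinearSeries.radius_eq_top_of_summable_norm
  intro r
  have := summable_abs_mul h (y := (r:ℝ)) r.coe_nonneg
  refine this.congr (fun n ↦ ?_)
  rw [ofScalars_norm, Real.norm_eq_abs]

theorem hasFPow {a : ℕ → ℝ} {K : ℝ} (h : IsBnd a K) :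
    HasFPowerSeriesOnBall (ofScalarsSum a) (ofScalars ℝ a) 0 ⊤ := by
  have h0 : (0:ENNReal) < (ofScalars ℝ a).radius := by rw [radius_top h]; exact ENNReal.zero_lt_top
  have := (ofScalars ℝ a).hasFPowerSeriesOnBall h0
  rw [radius_top h] at this
  exact this

theorem mem_top_ball (y : ℝ) : y ∈ EMetric.ball (0:ℝ) ⊤ := by
  exact edist_lt_top y 0

theorem diffAt {a : ℕ → ℝ} {K : ℝ} (h : IsBnd a K) (y : ℝ) :
    DifferentiableAt ℝ (ofScalarsSum a) y := by
  have hd := (hasFPow h).differentiableOn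
  refine (hd y (mem_top_ball y)).differentiableAt ?_
  have : Metric.eball (0:ℝ) ⊤ = Set.univ := by
    ext z; simp [Metric.mem_eball, edist_lt_top]
  rw [this]
  exact Filter.univ_mem

theorem cont {a : ℕ → ℝ} {K : ℝ} (h : IsBnd a K) :
    Continuous (ofScalarsSum a : ℝ → ℝ) :=
  continuous_iff_continuousAt.2 fun y ↦ (diffAt h y).continuousAt

set_option maxHeartbeats 1000000 in
theorem hasDerivAt_ofScalarsSum {a : ℕ → ℝ} {K : ℝ} (h : IsBnd a K) {y : ℝ} (hy : y ≠ 0) :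
    HasDerivAt (ofScalarsSum a) (ofScalarsSum (sh a) y) y := by
  have hd := (diffAt h y).hasDerivAt
  have hfd := (hasFPow h).fderiv
  have hsum0 := hfd.hasSum (y := y) (mem_top_ball y)
  have hsum1 : HasSum (fun n ↦ (ofScalars ℝ a).derivSeries n (fun _ ↦ y) y)
      (fderiv ℝ (ofScalarsSum a) (0 + y) y) :=
    hsum0.mapL (ContinuousLinearMap.apply ℝ ℝ y)
  rw [zero_add] at hsum1
  have hterm : ∀ n, (ofScalars ℝ a).derivSeries n (fun _ ↦ y) y
      = y * (sh a n * y ^ n) := by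
    intro n
    rw [FormalMultilinearSeries.derivSeries_apply_diag, ofScalars_apply_eq]
    simp only [nsmul_eq_mul, smul_eq_mul, sh]
    push_cast
    ring
  have hval : fderiv ℝ (ofScalarsSum a) y y = y * deriv (ofScalarsSum a) y := by
    calc fderiv ℝ (ofScalarsSum a) y y = fderiv ℝ (ofScalarsSum a) y (y • (1:ℝ)) := by
          norm_num
      _ = y • (fderiv ℝ (ofScalarsSum a) y (1:ℝ)) := by
          rw [map_smul]
      _ = y * deriv (ofScalarsSum a) y := by
          rw [fderiv_apply_one_eq_deriv, smul_eq_mul]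
  rw [hval] at hsum1
  simp only [hterm] at hsum1
  have hS := (hasSum_ofScalarsSum (isBnd_sh h) y).mul_left y
  have heq : deriv (ofScalarsSum a) y = ofScalarsSum (sh a) y :=
    mul_left_cancel₀ hy (hsum1.unique hS)
  exact heq ▸ hd

end BesselAux


namespace BesselAux2
open BesselAux

/-- Taylor coefficients of `gg ν` where `besselJ ν x = (x/2)^ν * gg ν (x^2)`. -/
noncomputable def cc (ν : ℝ) (n : ℕ) : ℝ :=
  (-1) ^ n / ((n.factorial : ℝ) * Real.Gamma (ν + n + 1) * 4 ^ n)

noncomputable def gg (ν : ℝ) : ℝ → ℝ := ofScalarsSum (cc ν)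
noncomputable def gg1 (ν : ℝ) : ℝ → ℝ := ofScalarsSum (sh (cc ν))
noncomputable def gg2 (ν : ℝ) : ℝ → ℝ := ofScalarsSum (sh (sh (cc ν)))

theorem gamma_pos {ν : ℝ} (hν : 0 ≤ ν) (n : ℕ) : 0 < Real.Gamma (ν + n + 1) :=
  Real.Gamma_pos_of_pos (by positivity)

theorem gamma_ge {ν : ℝ} (hν : 0 ≤ ν) (n : ℕ) :
    Real.Gamma (ν + 1) * n.factorial ≤ Real.Gamma (ν + n + 1) := by
  induction n with
  | zero =>
    simp only [Nat.cast_zero, add_zero, Nat.factorial_zero, Nat.cast_one, mul_one]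
    exact le_rfl
  | succ n ih =>
    have key : Real.Gamma (ν + ((n:ℕ) + 1 : ℕ) + 1) = (ν + n + 1) * Real.Gamma (ν + n + 1) := by
      have harg : ν + ((n:ℕ) + 1 : ℕ) + 1 = (ν + n + 1) + 1 := by push_cast; ring
      rw [harg, Real.Gamma_add_one (by positivity)]
    have h1 : (((n:ℕ)+1 : ℕ).factorial : ℝ) = ((n:ℝ) + 1) * n.factorial := by
      push_cast [Nat.factorial_succ]; ring
    rw [key, h1]
    have hg := gamma_pos hν n
    have hG1 : 0 < Real.Gamma (ν + 1) := Real.Gamma_pos_of_pos (by positivity)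
    have h2 : ((n:ℝ) + 1) ≤ ν + (n:ℝ) + 1 := by linarith
    calc Real.Gamma (ν+1) * (((n:ℝ)+1) * n.factorial)
        = ((n:ℝ)+1) * (Real.Gamma (ν+1) * n.factorial) := by ring
      _ ≤ ((n:ℝ)+1) * Real.Gamma (ν + n + 1) := by
          apply mul_le_mul_of_nonneg_left ih (by positivity)
      _ ≤ (ν + (n:ℝ) + 1) * Real.Gamma (ν + n + 1) :=
          mul_le_mul_of_nonneg_right h2 hg.le

theorem isBnd_cc {ν : ℝ} (hν : 0 ≤ ν) : IsBnd (cc ν) (1 / Real.Gamma (ν + 1)) := by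
  intro n
  have hG1 : 0 < Real.Gamma (ν + 1) := Real.Gamma_pos_of_pos (by positivity)
  have hg := gamma_pos hν n
  have hfac : (0:ℝ) < n.factorial := by exact_mod_cast Nat.factorial_pos n
  have h4 : (0:ℝ) < 4 ^ n := by positivity
  rw [cc, abs_div, abs_pow, abs_neg, abs_one, one_pow]
  rw [abs_of_pos (by positivity)]
  have hge := gamma_ge hν n
  have hfacge : (1:ℝ) ≤ n.factorial := by
    exact_mod_cast Nat.one_le_iff_ne_zero.mpr (Nat.factorial_pos n).ne'
  have key : Real.Gamma (ν+1) ≤ Real.Gamma (ν + n + 1) := by nlinarith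
  have hR : (1 / Real.Gamma (ν+1)) / ((4:ℝ)^n * n.factorial)
      = 1 / (Real.Gamma (ν+1) * ((4:ℝ)^n * n.factorial)) := by
    rw [div_div]
  rw [hR]
  refine one_div_le_one_div_of_le (by positivity) ?_
  nlinarith [mul_le_mul_of_nonneg_right key (by positivity : (0:ℝ) ≤ 4 ^ n * (n.factorial:ℝ))]

theorem cc_succ {ν : ℝ} (hν : 0 ≤ ν) (n : ℕ) :
    cc ν (n + 1) = -cc ν n / (4 * ((n:ℝ) + 1) * (ν + n + 1)) := by
  have hg := gamma_pos hν n
  have harg : ν + ((n:ℕ) + 1 : ℕ) + 1 = (ν + n + 1) + 1 := by push_cast; ring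
  have hfac : (((n:ℕ)+1 : ℕ).factorial : ℝ) = ((n:ℝ) + 1) * n.factorial := by
    push_cast [Nat.factorial_succ]; ring
  have hfacpos : (0:ℝ) < n.factorial := by exact_mod_cast Nat.factorial_pos n
  rw [cc, cc, harg, Real.Gamma_add_one (by positivity), hfac]
  have h1 : ((n:ℝ) + 1) ≠ 0 := by positivity
  have h2 : (ν + (n:ℝ) + 1) ≠ 0 := by positivity
  rw [pow_succ, pow_succ]
  field_simp

theorem gode {ν : ℝ} (hν : 0 ≤ ν) (y : ℝ) :
    4 * y * gg2 ν y + 4 * (ν + 1) * gg1 ν y + gg ν y = 0 := by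
  have b0 := isBnd_cc hν
  have b1 := isBnd_sh b0
  have b2 := isBnd_sh b1
  set F : ℕ → ℝ := fun n ↦ (4 * (ν+1) * sh (cc ν) n + cc ν n) * y ^ n with hF
  have HA : HasSum F (4 * (ν+1) * gg1 ν y + gg ν y) := by
    have h := ((hasSum_ofScalarsSum b1 y).mul_left (4 * (ν+1))).add (hasSum_ofScalarsSum b0 y)
    have hfe : F = fun n ↦ 4 * (ν+1) * (sh (cc ν) n * y ^ n) + cc ν n * y ^ n := by
      funext n; rw [hF]; ring
    rw [hfe]; exact h
  have hcoef : ∀ n : ℕ, 4 * (ν+1) * sh (cc ν) (n+1) + cc ν (n+1) = -(4 * sh (sh (cc ν)) n) := by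
    intro n
    have e2 : cc ν (n+2) = -cc ν (n+1) / (4 * ((n:ℝ) + 1 + 1) * (ν + (n + 1) + 1)) := by
      have := cc_succ hν (n+1)
      push_cast at this ⊢
      convert this using 3 <;> push_cast <;> ring
    rw [sh, sh, sh]
    have hn2 : ((n:ℝ) + 1 + 1) ≠ 0 := by positivity
    have hd : (ν + ((n:ℝ) + 1) + 1) ≠ 0 := by positivity
    have hcc2 := e2
    rw [show n + 1 + 1 = n + 2 from rfl] at hcc2
    rw [show ((n:ℕ) + 1) + 1 = n + 2 from rfl]
    rw [hcc2]
    push_cast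
    field_simp
    ring
  have HB : HasSum (fun n ↦ F (n+1)) (-(4 * y * gg2 ν y)) := by
    have h := (hasSum_ofScalarsSum b2 y).mul_left (-(4 * y))
    have hfe : (fun n ↦ F (n+1)) = fun n ↦ -(4*y) * (sh (sh (cc ν)) n * y ^ n) := by
      funext n
      rw [hF]
      simp only
      rw [hcoef n, pow_succ]
      ring
    have h2 : -(4 * y * gg2 ν y) = -(4*y) * ofScalarsSum (sh (sh (cc ν))) y := by
      rw [gg2]; ring
    rw [hfe, h2]; exact h
  have HB' := (hasSum_nat_add_iff (f := F) 1).mp HB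
  have hF0 : ∑ i ∈ Finset.range 1, F i = 0 := by
    rw [Finset.sum_range_one, hF]
    simp only [pow_zero, mul_one]
    have e1 : cc ν 1 = -cc ν 0 / (4 * ((0:ℝ) + 1) * (ν + 0 + 1)) := by
      have := cc_succ hν 0
      push_cast at this ⊢
      convert this using 2
    rw [sh, e1]
    push_cast
    have : (ν + 1) ≠ 0 := by positivity
    field_simp
    ring
  rw [hF0, add_zero] at HB'
  have := HA.unique HB'
  linarith

end BesselAux2

namespace BesselAux2
open BesselAux

theorem besselJ_eq {ν : ℝ} (hν : 0 ≤ ν) {x : ℝ} (hx : 0 < x) :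
    besselJ ν x = (x/2) ^ ν * gg ν (x^2) := by
  have hx2 : (0:ℝ) < x/2 := by linarith
  have hterm : ∀ k : ℕ, (-1:ℝ)^k * (x/2)^(ν + 2*(k:ℝ)) / (k.factorial * Real.Gamma (ν+k+1))
      = (x/2)^ν * (cc ν k * (x^2)^k) := by
    intro k
    rw [Real.rpow_add hx2]
    have h2k : (x/2) ^ ((2*(k:ℝ))) = (x^2 / 4) ^ k := by
      rw [show (2*(k:ℝ)) = ((2*k : ℕ) : ℝ) by push_cast; ring, Real.rpow_natCast, pow_mul]
      congr 1
      rw [div_pow]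
      norm_num
    rw [h2k, cc, div_pow]
    have hgne := (gamma_pos hν k).ne'
    have hfne : ((k.factorial : ℝ)) ≠ 0 := by exact_mod_cast (Nat.factorial_pos k).ne'
    field_simp
  rw [besselJ, tsum_congr hterm, tsum_mul_left]
  congr 1
  exact (hasSum_ofScalarsSum (isBnd_cc hν) (x^2)).tsum_eq

theorem hasDerivAt_gg {ν : ℝ} (hν : 0 ≤ ν) {y : ℝ} (hy : y ≠ 0) :
    HasDerivAt (gg ν) (gg1 ν y) y :=
  hasDerivAt_ofScalarsSum (isBnd_cc hν) hy

theorem hasDerivAt_gg1 {ν : ℝ} (hν : 0 ≤ ν) {y : ℝ} (hy : y ≠ 0) :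
    HasDerivAt (gg1 ν) (gg2 ν y) y :=
  hasDerivAt_ofScalarsSum (isBnd_sh (isBnd_cc hν)) hy

noncomputable def DD (ν : ℝ) (x : ℝ) : ℝ :=
  (x/2)^ν * (ν/x * gg ν (x^2) + 2*x*gg1 ν (x^2))

noncomputable def EE (ν : ℝ) (x : ℝ) : ℝ :=
  (x/2)^ν * ((ν^2-ν)/x^2 * gg ν (x^2) + (4*ν+2) * gg1 ν (x^2) + 4*x^2*gg2 ν (x^2))

theorem hasDerivAt_besselJ {ν : ℝ} (hν : 0 ≤ ν) {x : ℝ} (hx : 0 < x) :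
    HasDerivAt (besselJ ν) (DD ν x) x := by
  have hx2 : (0:ℝ) < x/2 := by linarith
  have h1 : HasDerivAt (fun t : ℝ ↦ t/2) (1/2) x := (hasDerivAt_id x).div_const 2
  have hpow : HasDerivAt (fun t : ℝ ↦ (t/2)^ν) ((ν * (x/2)^(ν-1)) * (1/2)) x :=
    HasDerivAt.comp (h₂ := fun s : ℝ ↦ s ^ ν) x (Real.hasDerivAt_rpow_const (Or.inl hx2.ne')) h1
  have hsq : HasDerivAt (fun t : ℝ ↦ t^2) (2*x) x := by
    simpa using hasDerivAt_pow 2 x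
  have hg : HasDerivAt (fun t : ℝ ↦ gg ν (t^2)) (gg1 ν (x^2) * (2*x)) x :=
    (hasDerivAt_gg hν (by positivity)).comp x hsq
  have hprod := hpow.mul hg
  have heq : besselJ ν =ᶠ[nhds x] fun t ↦ (t/2)^ν * gg ν (t^2) := by
    filter_upwards [IsOpen.mem_nhds isOpen_Ioi hx] with t ht
    exact besselJ_eq hν ht
  have hres := hprod.congr_of_eventuallyEq heq
  refine hres.congr_deriv (Eq.symm ?_)
  rw [DD, Real.rpow_sub hx2, Real.rpow_one]
  field_simp

theorem hasDerivAt_DD {ν : ℝ} (hν : 0 ≤ ν) {x : ℝ} (hx : 0 < x) :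
    HasDerivAt (DD ν) (EE ν x) x := by
  have hx2 : (0:ℝ) < x/2 := by linarith
  have h1 : HasDerivAt (fun t : ℝ ↦ t/2) (1/2) x := (hasDerivAt_id x).div_const 2
  have hpow : HasDerivAt (fun t : ℝ ↦ (t/2)^ν) ((ν * (x/2)^(ν-1)) * (1/2)) x :=
    HasDerivAt.comp (h₂ := fun s : ℝ ↦ s ^ ν) x (Real.hasDerivAt_rpow_const (Or.inl hx2.ne')) h1
  have hsq : HasDerivAt (fun t : ℝ ↦ t^2) (2*x) x := by
    simpa using hasDerivAt_pow 2 x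
  have hg : HasDerivAt (fun t : ℝ ↦ gg ν (t^2)) (gg1 ν (x^2) * (2*x)) x :=
    (hasDerivAt_gg hν (by positivity)).comp x hsq
  have hg1 : HasDerivAt (fun t : ℝ ↦ gg1 ν (t^2)) (gg2 ν (x^2) * (2*x)) x :=
    (hasDerivAt_gg1 hν (by positivity)).comp x hsq
  have hinv : HasDerivAt (fun t : ℝ ↦ ν * t⁻¹) (ν * (-(x^2)⁻¹)) x :=
    (hasDerivAt_inv hx.ne').const_mul ν
  have h2t : HasDerivAt (fun t : ℝ ↦ 2*t) 2 x := by
    simpa using (hasDerivAt_id x).const_mul 2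
  have hu := (hinv.mul hg).add (h2t.mul hg1)
  have hDD := hpow.mul hu
  have hfun : (DD ν) = fun t ↦ (t/2)^ν * (ν * t⁻¹ * gg ν (t^2) + 2*t*gg1 ν (t^2)) := by
    funext t
    rw [DD]
    ring
  rw [hfun]
  refine hDD.congr_deriv (Eq.symm ?_)
  simp only [Pi.mul_apply, Pi.add_apply]
  rw [EE, Real.rpow_sub hx2, Real.rpow_one]
  field_simp
  ring

theorem bessel_ode {ν : ℝ} (hν : 0 ≤ ν) {x : ℝ} (hx : 0 < x) :
    x^2 * EE ν x + x * DD ν x + (x^2 - ν^2) * besselJ ν x = 0 := by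
  rw [besselJ_eq hν hx, EE, DD]
  have h := gode hν (x^2)
  have hxne : x ≠ 0 := hx.ne'
  field_simp
  linear_combination ((x/2)^ν * x^2) * h

end BesselAux2

namespace BesselAux2
open BesselAux

theorem besselJ_pos {ν : ℝ} (hν : 0 ≤ ν) {x : ℝ} (hx : 0 < x)
    (hxlt : x < besselJZero ν) : 0 < besselJ ν x := by
  have hbdd : BddBelow {t : ℝ | 0 < t ∧ besselJ ν t = 0} := ⟨0, fun t ht ↦ ht.1.le⟩
  have hnotmem : ∀ t, 0 < t → t < besselJZero ν → besselJ ν t ≠ 0 := by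
    intro t ht1 ht2 h0
    have : besselJZero ν ≤ t := csInf_le hbdd ⟨ht1, h0⟩
    linarith
  have hG1 : 0 < Real.Gamma (ν + 1) := Real.Gamma_pos_of_pos (by positivity)
  have hcont : Continuous (gg ν) := cont (isBnd_cc hν)
  have hgg0 : 0 < gg ν 0 := by
    rw [gg, ofScalarsSum_zero, smul_eq_mul, mul_one, cc]
    norm_num
    positivity
  have hev : ∀ᶠ y in nhds (0:ℝ), 0 < gg ν y :=
    hcont.continuousAt.eventually (eventually_gt_nhds hgg0)
  obtain ⟨δ, hδ, hball⟩ := Metric.eventually_nhds_iff.mp hev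
  set x0 : ℝ := min x (Real.sqrt δ) / 2 with hx0
  have hδs : 0 < Real.sqrt δ := Real.sqrt_pos.mpr hδ
  have hx0pos : 0 < x0 := by rw [hx0]; positivity
  have hx0lt : x0 < x := by
    rw [hx0]
    have : min x (Real.sqrt δ) ≤ x := min_le_left _ _
    linarith
  have hx0sq : x0^2 < δ := by
    have h1 : x0 ≤ Real.sqrt δ / 2 := by
      rw [hx0]
      have := min_le_right x (Real.sqrt δ)
      linarith
    have h2 : x0^2 ≤ (Real.sqrt δ / 2)^2 := by
      apply pow_le_pow_left₀ hx0pos.le h1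
    have h3 : (Real.sqrt δ / 2)^2 = δ / 4 := by
      rw [div_pow, Real.sq_sqrt hδ.le]
      norm_num
    rw [h3] at h2
    linarith
  have hJx0 : 0 < besselJ ν x0 := by
    rw [besselJ_eq hν hx0pos]
    apply mul_pos (Real.rpow_pos_of_pos (by linarith) ν)
    apply hball
    rw [Real.dist_eq, sub_zero, abs_of_pos (by positivity)]
    exact hx0sq
  have hJxne : besselJ ν x ≠ 0 := hnotmem x hx hxlt
  rcases lt_or_gt_of_ne hJxne with hneg | hpos
  · exfalso
    have hcontBes : ContinuousOn (besselJ ν) (Set.Icc x0 x) := by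
      intro t ht
      exact (hasDerivAt_besselJ hν (lt_of_lt_of_le hx0pos ht.1)).continuousAt.continuousWithinAt
    have hsub := intermediate_value_Ioo' hx0lt.le hcontBes
    have h0mem : (0:ℝ) ∈ Set.Ioo (besselJ ν x) (besselJ ν x0) := ⟨hneg, hJx0⟩
    obtain ⟨z, hz, hz0⟩ := hsub h0mem
    exact hnotmem z (lt_trans hx0pos hz.1) (lt_trans hz.2 hxlt) hz0
  · exact hpos

end BesselAux2


open BesselAux BesselAux2

theorem besselJ_log_deriv_mono_in_order (ν μ r : ℝ) (hν : 0 ≤ ν) (hνμ : ν < μ)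
    (hr : r ∈ Set.Ioo 0 (besselJZero ν)) (hrμ : r < besselJZero μ) :
    r * deriv (besselJ ν) r / besselJ ν r < r * deriv (besselJ μ) r / besselJ μ r := by
  obtain ⟨hr0, hrν⟩ := hr
  have hμ0 : 0 ≤ μ := le_of_lt (lt_of_le_of_lt hν hνμ)
  set W : ℝ → ℝ := fun t ↦ t * (besselJ ν t * DD μ t - besselJ μ t * DD ν t) with hW
  -- derivative of the Wronskian-type function
  have hWd : ∀ t : ℝ, 0 < t →
      HasDerivAt W ((μ^2 - ν^2)/t * (besselJ ν t * besselJ μ t)) t := by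
    intro t ht
    have hJν := hasDerivAt_besselJ hν ht
    have hJμ := hasDerivAt_besselJ hμ0 ht
    have hDν := hasDerivAt_DD hν ht
    have hDμ := hasDerivAt_DD hμ0 ht
    have h := (hasDerivAt_id t).mul ((hJν.mul hDμ).sub (hJμ.mul hDν))
    refine h.congr_deriv (Eq.symm ?_)
    simp only [Pi.mul_apply, Pi.sub_apply, id_eq]
    have oν := bessel_ode hν ht
    have oμ := bessel_ode hμ0 ht
    have htne : t ≠ 0 := ht.ne'
    field_simp
    linear_combination (besselJ μ t) * oν - (besselJ ν t) * oμ
  have hposJ : ∀ t : ℝ, 0 < t → t ≤ r → 0 < besselJ ν t ∧ 0 < besselJ μ t := by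
    intro t ht htr
    exact ⟨besselJ_pos hν ht (lt_of_le_of_lt htr hrν),
      besselJ_pos hμ0 ht (lt_of_le_of_lt htr hrμ)⟩
  have hpos : ∀ t : ℝ, 0 < t → t ≤ r →
      0 < (μ^2 - ν^2)/t * (besselJ ν t * besselJ μ t) := by
    intro t ht htr
    obtain ⟨h1, h2⟩ := hposJ t ht htr
    have hsq : (0:ℝ) < μ^2 - ν^2 := by nlinarith
    exact mul_pos (div_pos hsq ht) (mul_pos h1 h2)
  have hmono : StrictMonoOn W (Set.Ioc 0 r) := by
    apply strictMonoOn_of_deriv_pos (convex_Ioc 0 r)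
    · intro t ht
      exact (hWd t ht.1).continuousAt.continuousWithinAt
    · rw [interior_Ioc]
      intro t ht
      rw [(hWd t ht.1).deriv]
      exact hpos t ht.1 ht.2.le
  -- limit of W at 0+
  have hνμpos : 0 < ν + μ := by linarith
  set Q : ℝ → ℝ := fun t ↦ (μ - ν) * (gg ν (t^2) * gg μ (t^2)) +
      2*t^2*(gg ν (t^2) * gg1 μ (t^2) - gg μ (t^2) * gg1 ν (t^2)) with hQ
  have hWQ : ∀ t : ℝ, 0 < t → W t = (t/2)^(ν+μ) * Q t := by
    intro t ht
    have ht2 : (0:ℝ) < t/2 := by linarith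
    rw [hW]
    simp only
    rw [besselJ_eq hν ht, besselJ_eq hμ0 ht, DD, DD, hQ, Real.rpow_add ht2]
    have htne : t ≠ 0 := ht.ne'
    field_simp
    ring
  have hcν : Continuous (gg ν) := cont (isBnd_cc hν)
  have hcμ : Continuous (gg μ) := cont (isBnd_cc hμ0)
  have hc1ν : Continuous (gg1 ν) := cont (isBnd_sh (isBnd_cc hν))
  have hc1μ : Continuous (gg1 μ) := cont (isBnd_sh (isBnd_cc hμ0))
  have hQc : Continuous Q := by
    rw [hQ]
    have hp2 : Continuous fun t : ℝ ↦ t^2 := continuous_pow 2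
    exact ((continuous_const.mul ((hcν.comp hp2).mul (hcμ.comp hp2)))).add
      ((continuous_const.mul hp2).mul
        (((hcν.comp hp2).mul (hc1μ.comp hp2)).sub ((hcμ.comp hp2).mul (hc1ν.comp hp2))))
  have h1 : Filter.Tendsto (fun t : ℝ ↦ (t/2)^(ν+μ)) (nhdsWithin 0 (Set.Ioi 0)) (nhds 0) := by
    have hc : ContinuousAt (fun s : ℝ ↦ s ^ (ν+μ)) 0 :=
      Real.continuousAt_rpow_const 0 (ν+μ) (Or.inr hνμpos.le)
    have hd2 : Filter.Tendsto (fun t : ℝ ↦ t/2) (nhds 0) (nhds 0) := by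
      have := (continuous_id.div_const (2:ℝ)).tendsto (0:ℝ)
      simpa using this
    have hcomp := hc.tendsto.comp hd2
    rw [show (0:ℝ)^(ν+μ) = (0:ℝ) from Real.zero_rpow hνμpos.ne'] at hcomp
    exact (hcomp.mono_left nhdsWithin_le_nhds : _)
  have h2 : Filter.Tendsto Q (nhdsWithin 0 (Set.Ioi 0)) (nhds (Q 0)) :=
    hQc.continuousAt.tendsto.mono_left nhdsWithin_le_nhds
  have htend : Filter.Tendsto W (nhdsWithin 0 (Set.Ioi 0)) (nhds 0) := by
    have hmul := h1.mul h2
    rw [zero_mul] at hmul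
    apply hmul.congr'
    filter_upwards [self_mem_nhdsWithin] with t ht
    exact (hWQ t ht).symm
  -- conclude W r > 0
  have hr2 : (0:ℝ) < r/2 := by linarith
  have h0le : 0 ≤ W (r/2) := by
    refine le_of_tendsto htend ?_
    filter_upwards [Ioo_mem_nhdsGT_of_mem (Set.left_mem_Ico.mpr hr2)] with t ht
    exact (hmono ⟨ht.1, by linarith [ht.2]⟩ ⟨hr2, by linarith⟩ ht.2).le
  have hWr : 0 < W r :=
    lt_of_le_of_lt h0le (hmono ⟨hr2, by linarith⟩ ⟨hr0, le_rfl⟩ (by linarith))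
  obtain ⟨hJνr, hJμr⟩ := hposJ r hr0 le_rfl
  rw [(hasDerivAt_besselJ hν hr0).deriv, (hasDerivAt_besselJ hμ0 hr0).deriv]
  rw [div_lt_div_iff₀ hJνr hJμr]
  have hWr' : 0 < r * (besselJ ν r * DD μ r - besselJ μ r * DD ν r) := hWr
  nlinarith [hWr']
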